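/- For every integer M ≥ 1 and every integer j with 1 ≤ j ≤ M, the well-conditioned multiproduct parameter k_j := ⌈(2√2·M/π)·(sin(π(2j−1)/(8M)))^{−1}⌉ satisfies M < k_j and k_j ≤ 3·M². -/

import Mathlib

set_option maxHeartbeats 1000000


/-- The well-conditioned multiproduct parameters (`j` is 1-based). -/
noncomputable def wellCondK (M j : ℕ) : ℕ :=
  ⌈(2 * Real.sqrt 2 * M / Real.pi) / Real.sin (Real.pi * (2 * (j : ℝ) - 1) / (8 * M))⌉₊

theorem stmt19 (M j : ℕ) (hM : 1 ≤ M) (hj1 : 1 ≤ j) (hjM : j ≤ M) :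
    M < wellCondK M j ∧ wellCondK M j ≤ 3 * M ^ 2 := by
  have hM1 : (1:ℝ) ≤ M := by exact_mod_cast hM
  have hMpos : (0:ℝ) < M := by linarith
  have hj1' : (1:ℝ) ≤ j := by exact_mod_cast hj1
  have hjM' : (j:ℝ) ≤ M := by exact_mod_cast hjM
  have hpi := Real.pi_pos
  have hpil : Real.pi < 3.15 := by linarith [Real.pi_lt_d2]
  have hpig : 3.14 < Real.pi := by linarith [Real.pi_gt_d2]
  have hs2 : Real.sqrt 2 ^ 2 = 2 := Real.sq_sqrt (by norm_num)
  have hs2pos : 0 < Real.sqrt 2 := Real.sqrt_pos.mpr (by norm_num)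
  have hs2u : Real.sqrt 2 < 1.415 := by nlinarith
  have hs2l : 1.414 < Real.sqrt 2 := by nlinarith
  set θ := Real.pi * (2*(j:ℝ) - 1) / (8*M) with hθdef
  have h8M : (0:ℝ) < 8*M := by linarith
  have hθpos : 0 < θ := div_pos (by nlinarith) h8M
  have hθle : θ ≤ Real.pi/4 := by
    rw [hθdef, div_le_div_iff₀ h8M (by norm_num)]
    nlinarith
  have hθhalf : θ ≤ Real.pi/2 := by linarith
  have hsinpos : 0 < Real.sin θ := Real.sin_pos_of_pos_of_lt_pi hθpos (by linarith)
  have hsinle : Real.sin θ ≤ Real.sqrt 2 / 2 := by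
    have h4 : Real.sin (Real.pi/4) = Real.sqrt 2 / 2 := Real.sin_pi_div_four
    rw [← h4]
    exact Real.strictMonoOn_sin.monotoneOn ⟨by linarith, hθhalf⟩
      ⟨by linarith, by linarith⟩ hθle
  set t := Real.pi/(8*M) with htdef
  have htpos : 0 < t := div_pos hpi h8M
  have htle1 : t ≤ 1 := by
    rw [htdef, div_le_one h8M]; nlinarith
  have htleθ : t ≤ θ := by
    rw [htdef, hθdef, div_le_div_iff₀ h8M h8M]
    nlinarith [mul_nonneg (mul_nonneg hpi.le (show (0:ℝ) ≤ 2*(j:ℝ)-2 by linarith)) h8M.le]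
  have hsin_t_le : Real.sin t ≤ Real.sin θ :=
    Real.strictMonoOn_sin.monotoneOn ⟨by linarith, by linarith⟩
      ⟨by linarith, hθhalf⟩ htleθ
  have hcube : t - t^3/4 < Real.sin t := by nlinarith [Real.sin_gt_sub_cube htpos, pow_pos htpos 3]
  have hMsin : (0.37:ℝ) ≤ M * Real.sin θ := by
    have h1 : (M:ℝ) * (t - t^3/4) = Real.pi/8 - Real.pi^3/(2048*M^2) := by
      rw [htdef]; field_simp; ring
    have h2 : Real.pi^3/(2048*M^2) ≤ Real.pi^3/2048 := by
      have hp3 : 0 < Real.pi^3 := pow_pos hpi 3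
      have hm2 : (1:ℝ) ≤ (M:ℝ)^2 := by nlinarith
      rw [div_le_div_iff₀ (by positivity) (by norm_num)]
      nlinarith [mul_le_mul_of_nonneg_left hm2 hp3.le]
    have hp2 : Real.pi^2 < 9.9225 := by nlinarith
    have hπ3 : Real.pi^3 < 31.26 := by nlinarith [mul_lt_mul_of_pos_left hp2 hpi]
    have h3 : (0.37:ℝ) ≤ M * (t - t^3/4) := by rw [h1]; linarith
    have h4 : (M:ℝ) * (t - t^3/4) ≤ M * Real.sin θ := by
      apply mul_le_mul_of_nonneg_left _ hMpos.le
      linarith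
    linarith
  constructor
  · rw [wellCondK, Nat.lt_ceil]
    rw [lt_div_iff₀ hsinpos, lt_div_iff₀ hpi]
    have hkey : Real.sin θ * Real.pi < 2 * Real.sqrt 2 := by nlinarith
    nlinarith [mul_lt_mul_of_pos_left hkey hMpos]
  · rw [wellCondK, Nat.ceil_le]
    push_cast
    rw [div_le_iff₀ hsinpos, div_le_iff₀ hpi]
    nlinarith [mul_le_mul_of_nonneg_left hMsin (show (0:ℝ) ≤ 3*M*Real.pi by positivity)]
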